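/- arXiv:2206.14119 — 2 statements merged into one kernel-verified Lean document; each statement's English description precedes it below -/
import Mathlib

section
/- Let M and N be abelian groups, where M ≅ ⊕_p (F_p ⊕ (ℚ_p/ℤ_p)^{r_p}) and N ≅ ⊕_p (F'_p ⊕ (ℚ_p/ℤ_p)^{r'_p}) with each F_p, F'_p a finite abelian p-group and r_p, r'_p natural numbers (sums over all primes p). Then the abelian group Hom(M, N), with the topology of pointwise convergence (N discrete), is a profinite group. -/
/-- The Prüfer `p`-group `ℚ_p/ℤ_p`. -/
abbrev PruferGroup (p : ℕ) [Fact p.Prime] : Type :=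
  ℚ_[p] ⧸ (PadicInt.subring p).toAddSubgroup

variable {p : ℕ} [Fact p.Prime]

lemma prufer_mk_eq_zero (q : ℚ_[p]) :
    (QuotientAddGroup.mk q : PruferGroup p) = 0 ↔ ‖q‖ ≤ 1 :=
  QuotientAddGroup.eq_zero_iff q

lemma prufer_nsmul_mk (n : ℕ) (q : ℚ_[p]) :
    n • (QuotientAddGroup.mk q : PruferGroup p) = QuotientAddGroup.mk (n • q) := by
  exact (map_nsmul (QuotientAddGroup.mk' ((PadicInt.subring p).toAddSubgroup)) n q).symm

lemma prufer_tor (x : PruferGroup p) : ∃ k : ℕ, (p ^ k : ℕ) • x = 0 := by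
  obtain ⟨q, rfl⟩ := QuotientAddGroup.mk_surjective x
  have hp1 : (1:ℝ) < (p:ℝ) := by exact_mod_cast (Fact.out : p.Prime).one_lt
  obtain ⟨k, hk⟩ := pow_unbounded_of_one_lt ‖q‖ hp1
  refine ⟨k, ?_⟩
  rw [prufer_nsmul_mk, prufer_mk_eq_zero]
  have : ‖((p:ℚ_[p]))^k * q‖ = ((p:ℝ))⁻¹^k * ‖q‖ := by
    rw [norm_mul, norm_pow, Padic.norm_p]
  have hq : (p:ℕ)^k • q = ((p:ℚ_[p]))^k * q := by
    simp [nsmul_eq_mul]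
  rw [hq, this]
  rw [inv_pow]
  rw [inv_mul_le_iff₀ (by positivity), mul_one]
  exact hk.le

lemma prufer_mk_sub (a b : ℚ_[p]) :
    (QuotientAddGroup.mk a : PruferGroup p) = QuotientAddGroup.mk b ↔ ‖a - b‖ ≤ 1 := by
  rw [← sub_eq_zero, ← QuotientAddGroup.mk_sub, prufer_mk_eq_zero]

lemma prufer_ntor_finite (n : ℕ) (hn : n ≠ 0) :
    {y : PruferGroup p | n • y = 0}.Finite := by
  have hp1 : (1:ℝ) < (p:ℝ) := by exact_mod_cast (Fact.out : p.Prime).one_lt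
  have hnQ : ((n:ℚ_[p])) ≠ 0 := Nat.cast_ne_zero.mpr hn
  have hnn : (0:ℝ) < ‖(n:ℚ_[p])‖ := norm_pos_iff.mpr hnQ
  refine Set.Finite.subset (Set.finite_range
    (fun i : Fin n => (QuotientAddGroup.mk ((i:ℚ_[p]) / n) : PruferGroup p))) ?_
  rintro y hy
  obtain ⟨q, rfl⟩ := QuotientAddGroup.mk_surjective y
  rw [Set.mem_setOf_eq, prufer_nsmul_mk, prufer_mk_eq_zero] at hy
  have ha : ‖(n:ℚ_[p]) * q‖ ≤ 1 := by
    simpa [nsmul_eq_mul] using hy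
  set w : ℤ_[p] := ⟨(n:ℚ_[p]) * q, ha⟩ with hw
  obtain ⟨k, hk⟩ := exists_pow_lt_of_lt_one hnn
    (show (p:ℝ)⁻¹ < 1 by rw [inv_lt_one_iff₀]; right; exact hp1)
  set z : ℕ := w.appr k with hzdef
  have hspec := PadicInt.appr_spec k w
  have hnorm : ‖w - (z:ℤ_[p])‖ ≤ (p:ℝ) ^ (-(k:ℤ)) :=
    (PadicInt.norm_le_pow_iff_mem_span_pow _ k).mpr hspec
  have hnorm' : ‖w - (z:ℤ_[p])‖ ≤ ‖(n:ℚ_[p])‖ := by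
    refine hnorm.trans ?_
    rw [zpow_neg, zpow_natCast, ← inv_pow]
    exact hk.le
  have hQ : ‖(n:ℚ_[p]) * q - (z:ℚ_[p])‖ ≤ ‖(n:ℚ_[p])‖ := by
    have : ((w - (z:ℤ_[p]) : ℤ_[p]) : ℚ_[p]) = (n:ℚ_[p]) * q - (z:ℚ_[p]) := by
      rw [PadicInt.coe_sub, PadicInt.coe_natCast]
    rw [← this]
    exact hnorm'
  refine ⟨⟨z % n, Nat.mod_lt _ (Nat.pos_of_ne_zero hn)⟩, ?_⟩
  rw [prufer_mk_sub]
  have hzz : ((z:ℚ_[p])) = (n:ℚ_[p]) * ((z/n : ℕ):ℚ_[p]) + ((z % n : ℕ):ℚ_[p]) := by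
    exact_mod_cast (Nat.div_add_mod z n).symm
  have hid : ((((z % n : ℕ)):ℚ_[p]) / (n:ℚ_[p])) - q
      = ((z:ℚ_[p]) - (n:ℚ_[p]) * q) / n - ((z/n : ℕ):ℚ_[p]) := by
    rw [hzz]
    field_simp
    ring
  rw [hid]
  rw [sub_eq_add_neg]
  refine le_trans (Padic.nonarchimedean _ _) (max_le ?_ ?_)
  · rw [norm_div]
    rw [div_le_one hnn]
    rw [← norm_neg]
    simpa [neg_sub] using hQ
  · rw [norm_neg]
    exact_mod_cast Padic.norm_int_le_one (((z/n : ℕ):ℤ))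

section Aux

lemma nsmul_fst {A B : Type*} [AddCommGroup A] [AddCommGroup B] (n : ℕ) (c : A × B) :
    (n • c).1 = n • c.1 := rfl

lemma nsmul_snd {A B : Type*} [AddCommGroup A] [AddCommGroup B] (n : ℕ) (c : A × B) :
    (n • c).2 = n • c.2 := rfl

lemma ptor_mono {G : Type*} [AddCommGroup G] {p a b : ℕ} (hab : a ≤ b) {x : G}
    (h : (p ^ a : ℕ) • x = 0) : (p ^ b : ℕ) • x = 0 := by
  have hb : p ^ b = p ^ (b - a) * p ^ a := by rw [← pow_add, Nat.sub_add_cancel hab]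
  rw [hb, mul_comm, mul_nsmul, h, smul_zero]

lemma eq_zero_of_ptor_ntor {G : Type*} [AddCommGroup G] {p n : ℕ} (hp : p.Prime)
    (hpn : ¬ p ∣ n) {x : G} (hk : ∃ k, (p ^ k : ℕ) • x = 0) (hn : n • x = 0) : x = 0 := by
  obtain ⟨k, hk⟩ := hk
  have h1 : addOrderOf x ∣ n := addOrderOf_dvd_iff_nsmul_eq_zero.mpr hn
  have h2 : addOrderOf x ∣ p ^ k := addOrderOf_dvd_iff_nsmul_eq_zero.mpr hk
  have hcop : Nat.Coprime (p ^ k) n := Nat.Coprime.pow_left k (hp.coprime_iff_not_dvd.mpr hpn)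
  have : addOrderOf x ∣ 1 := hcop ▸ Nat.dvd_gcd h2 h1
  have : addOrderOf x = 1 := Nat.dvd_one.mp this
  exact AddMonoid.addOrderOf_eq_one_iff.mp this

end Aux

section Comp

variable {p : ℕ} [Fact p.Prime] {Fp : Type} [AddCommGroup Fp] {m : ℕ}

lemma pi_nsmul_apply {ι : Type} {G : ι → Type*} [∀ i, AddCommGroup (G i)] (n : ℕ)
    (f : ∀ i, G i) (i : ι) : (n • f) i = n • f i := rfl

lemma comp_ptor (hFp : ∀ x : Fp, ∃ k : ℕ, (p ^ k : ℕ) • x = 0)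
    (c : Fp × (Fin m → PruferGroup p)) : ∃ k : ℕ, (p ^ k : ℕ) • c = 0 := by
  obtain ⟨k1, hk1⟩ := hFp c.1
  choose K hK using fun i => prufer_tor (c.2 i)
  set K' := max k1 (Finset.univ.sup K) with hK'
  have h1 : (p ^ K' : ℕ) • c.1 = 0 := ptor_mono (le_max_left _ _) hk1
  have h2 : ∀ i, (p ^ K' : ℕ) • c.2 i = 0 := fun i =>
    ptor_mono (le_trans (Finset.le_sup (Finset.mem_univ i)) (le_max_right _ _)) (hK i)
  refine ⟨K', Prod.ext ?_ ?_⟩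
  · rw [nsmul_fst, h1, Prod.fst_zero]
  · rw [nsmul_snd, Prod.snd_zero]
    funext i
    exact h2 i

lemma comp_ntor_finite [Finite Fp] {n : ℕ} (hn : n ≠ 0) :
    {c : Fp × (Fin m → PruferGroup p) | n • c = 0}.Finite := by
  rw [← Set.finite_coe_iff]
  haveI : Finite ↥{y : PruferGroup p | n • y = 0} := (prufer_ntor_finite n hn).to_subtype
  refine Finite.of_injective
    (fun c : ↥{c : Fp × (Fin m → PruferGroup p) | n • c = 0} =>
      ((c.1.1, fun j => ⟨c.1.2 j, ?_⟩) : Fp × (Fin m → ↥{y : PruferGroup p | n • y = 0})))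
    ?_
  · have hc := c.2
    have : n • c.1.2 = 0 := by
      have := congrArg Prod.snd hc
      rwa [nsmul_snd, Prod.snd_zero] at this
    show n • c.1.2 j = 0
    rw [← pi_nsmul_apply, this]
    rfl
  · intro a b h
    have h1 : a.1.1 = b.1.1 := congrArg (fun x => x.1) h
    have h2 : ∀ j, a.1.2 j = b.1.2 j := fun j =>
      congrArg Subtype.val (congrFun (congrArg (fun x => x.2) h) j)
    exact Subtype.ext (Prod.ext h1 (funext h2))

end Comp

section DS
open scoped DirectSum

lemma ds_nsmul_apply {ι : Type} [DecidableEq ι] {C : ι → Type} [∀ i, AddCommGroup (C i)]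
    (n : ℕ) (z : ⨁ i, C i) (i : ι) : (n • z) i = n • z i :=
  map_nsmul (DFinsupp.evalAddMonoidHom i) n z

lemma ds_tor {ι : Type} [DecidableEq ι] {C : ι → Type} [∀ i, AddCommGroup (C i)]
    (h : ∀ i (c : C i), ∃ n : ℕ, n ≠ 0 ∧ n • c = 0) (z : ⨁ i, C i) :
    ∃ n : ℕ, n ≠ 0 ∧ n • z = 0 := by
  induction z using DirectSum.induction_on with
  | zero => exact ⟨1, one_ne_zero, smul_zero 1⟩
  | of i c =>
      obtain ⟨nn, hnn, hc⟩ := h i c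
      exact ⟨nn, hnn, by rw [← map_nsmul (DirectSum.of C i), hc, map_zero]⟩
  | add x y hx hy =>
      obtain ⟨a, ha, hax⟩ := hx
      obtain ⟨b, hb, hby⟩ := hy
      refine ⟨a * b, mul_ne_zero ha hb, ?_⟩
      have h1 : (a * b) • x = 0 := by rw [mul_nsmul, hax, smul_zero]
      have h2 : (a * b) • y = 0 := by rw [mul_comm, mul_nsmul, hby, smul_zero]
      rw [smul_add, h1, h2, add_zero]

lemma ds_ntor_finite {C : {p : ℕ // p.Prime} → Type} [∀ p, AddCommGroup (C p)]
    (hfin : ∀ p {n : ℕ}, n ≠ 0 → {c : C p | n • c = 0}.Finite)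
    (hptor : ∀ p (c : C p), ∃ k : ℕ, (p.1 ^ k : ℕ) • c = 0)
    {n : ℕ} (hn : n ≠ 0) : {z : ⨁ p, C p | n • z = 0}.Finite := by
  rw [← Set.finite_coe_iff]
  haveI : Finite {q : {p : ℕ // p.Prime} // q.1 ∣ n} := by
    refine Finite.of_injective (fun q : {q : {p : ℕ // p.Prime} // q.1 ∣ n} =>
      (⟨q.1.1, Nat.mem_divisors.mpr ⟨q.2, hn⟩⟩ : n.divisors)) ?_
    intro a b hab
    exact Subtype.ext (Subtype.ext (congrArg (fun x => x.1) hab))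
  haveI : ∀ q : {q : {p : ℕ // p.Prime} // q.1 ∣ n}, Finite ↥{c : C q.1 | n • c = 0} :=
    fun q => (hfin q.1 hn).to_subtype
  have key : ∀ (z : ↥{z : ⨁ p, C p | n • z = 0}) (p : {p : ℕ // p.Prime}),
      n • z.1 p = 0 := by
    intro z p
    rw [← ds_nsmul_apply, show n • z.1 = 0 from z.2]
    simp
  refine Finite.of_injective (fun z : ↥{z : ⨁ p, C p | n • z = 0} =>
    (fun q => (⟨z.1 q.1, key z q.1⟩ : {c : C q.1 | n • c = 0}) :
      ∀ q : {q : {p : ℕ // p.Prime} // q.1 ∣ n}, {c : C q.1 | n • c = 0})) ?_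
  intro a b h
  refine Subtype.ext (DFinsupp.ext fun p => ?_)
  by_cases hp : p.1 ∣ n
  · exact congrArg Subtype.val (congrFun h ⟨p, hp⟩)
  · have hpn : ¬ p.1 ∣ n := hp
    have ha0 : a.1 p = 0 := eq_zero_of_ptor_ntor p.2 hpn (hptor p _) (key a p)
    have hb0 : b.1 p = 0 := eq_zero_of_ptor_ntor p.2 hpn (hptor p _) (key b p)
    rw [ha0, hb0]

end DS

/-- If `M ≅ ⊕_p (F_p ⊕ (ℚ_p/ℤ_p)^{r_p})` and `N ≅ ⊕_p (F'_p ⊕ (ℚ_p/ℤ_p)^{r'_p})` with `F_p, F'_p`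
finite abelian `p`-groups, then `Hom(M, N)` with the topology of pointwise convergence
(`N` discrete) is a profinite group. -/
theorem stmt_4 (M N : Type) [AddCommGroup M] [AddCommGroup N]
    (F F' : {p : ℕ // p.Prime} → Type)
    [∀ p, AddCommGroup (F p)] [∀ p, Finite (F p)]
    [∀ p, AddCommGroup (F' p)] [∀ p, Finite (F' p)]
    (hF : ∀ p, ∀ x : F p, ∃ k : ℕ, (p.1 ^ k : ℕ) • x = 0)
    (hF' : ∀ p, ∀ x : F' p, ∃ k : ℕ, (p.1 ^ k : ℕ) • x = 0)
    (r r' : {p : ℕ // p.Prime} → ℕ)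
    (eM : Nonempty (M ≃+
      DirectSum {p : ℕ // p.Prime} (fun p => F p × (Fin (r p) → @PruferGroup p.1 ⟨p.2⟩))))
    (eN : Nonempty (N ≃+
      DirectSum {p : ℕ // p.Prime} (fun p => F' p × (Fin (r' p) → @PruferGroup p.1 ⟨p.2⟩)))) :
    letI : TopologicalSpace N := ⊥
    letI : TopologicalSpace (M →+ N) :=
      TopologicalSpace.induced (fun f => (f : M → N)) Pi.topologicalSpace
    CompactSpace (M →+ N) ∧ T2Space (M →+ N) ∧ TotallyDisconnectedSpace (M →+ N) := by
  obtain ⟨eM⟩ := eM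
  obtain ⟨eN⟩ := eN
  letI tN : TopologicalSpace N := ⊥
  haveI : DiscreteTopology N := ⟨rfl⟩
  letI tH : TopologicalSpace (M →+ N) :=
    TopologicalSpace.induced (fun f => (f : M → N)) Pi.topologicalSpace
  haveI : ContinuousAdd N := ⟨continuous_of_discreteTopology⟩
  have hemb : Topology.IsEmbedding (fun f : M →+ N => (f : M → N)) :=
    ⟨⟨rfl⟩, fun f g h => DFunLike.coe_injective h⟩
  -- torsion of M
  have hMtor : ∀ x : M, ∃ n : ℕ, n ≠ 0 ∧ n • x = 0 := by
    intro x
    obtain ⟨nn, hnn, h0⟩ := ds_tor (fun p c => by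
      obtain ⟨k, hk⟩ := @comp_ptor p.1 ⟨p.2⟩ (F p) _ (r p) (hF p) c
      exact ⟨p.1 ^ k, pow_ne_zero k p.2.ne_zero, hk⟩) (eM x)
    refine ⟨nn, hnn, eM.injective ?_⟩
    rw [map_nsmul, h0, map_zero]
  -- finiteness of n-torsion of N
  have hNtor : ∀ n : ℕ, n ≠ 0 → {y : N | n • y = 0}.Finite := by
    intro n hn
    have hD := ds_ntor_finite
      (fun p {m} hm => @comp_ntor_finite p.1 ⟨p.2⟩ (F' p) _ (r' p) _ m hm)
      (fun p c => @comp_ptor p.1 ⟨p.2⟩ (F' p) _ (r' p) (hF' p) c) hn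
    have hpre : {y : N | n • y = 0} = ⇑eN ⁻¹' {z | n • z = 0} := by
      ext y
      simp only [Set.mem_preimage, Set.mem_setOf_eq, ← map_nsmul]
      exact ⟨fun h => by rw [h, map_zero], fun h => eN.injective (by rw [h, map_zero])⟩
    rw [hpre]
    exact Set.Finite.preimage (Set.injOn_of_injective eN.injective) hD
  choose nx hnx hnxs using hMtor
  -- the range of the coercion
  have hrange : Set.range (fun f : M →+ N => (f : M → N)) =
      {f : M → N | ∀ x y, f (x + y) = f x + f y} := by
    ext f
    constructor
    · rintro ⟨g, rfl⟩ x y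
      exact map_add g x y
    · intro hf
      exact ⟨AddMonoidHom.mk' f hf, rfl⟩
  have hclosed : IsClosed (Set.range (fun f : M →+ N => (f : M → N))) := by
    rw [hrange]
    have : {f : M → N | ∀ x y, f (x + y) = f x + f y} =
        ⋂ (x : M) (y : M), {f : M → N | f (x + y) = f x + f y} := by
      ext f; simp
    rw [this]
    exact isClosed_iInter fun x => isClosed_iInter fun y =>
      isClosed_eq (continuous_apply _) ((continuous_apply x).add (continuous_apply y))
  have hKcomp : IsCompact (Set.univ.pi fun x : M => {y : N | nx x • y = 0}) :=
    isCompact_univ_pi fun x => (hNtor (nx x) (hnx x)).isCompact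
  have hsub : Set.range (fun f : M →+ N => (f : M → N)) ⊆
      Set.univ.pi fun x : M => {y : N | nx x • y = 0} := by
    rintro _ ⟨g, rfl⟩ x _
    show nx x • g x = 0
    rw [← map_nsmul, hnxs x, map_zero]
  have hrc : IsCompact (Set.range (fun f : M →+ N => (f : M → N))) :=
    hKcomp.of_isClosed_subset hclosed hsub
  refine ⟨⟨?_⟩, hemb.t2Space, ⟨?_⟩⟩
  · rw [hemb.isCompact_iff, Set.image_univ]
    exact hrc
  · exact hemb.isTotallyDisconnected
      (isTotallyDisconnected_of_totallyDisconnectedSpace _)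
end

section
/- Let K be an algebraically closed field of characteristic zero and G a connected algebraic group over K. Then the group G(K) of K-points is generated by its divisible subgroups. In the special case G linear: every element of G(K) is a product of a semisimple element (lying in a torus, whose K-points form a divisible group) and unipotent elements (each lying in a subgroup isomorphic to 𝔾_a(K) = (K,+), which is divisible). -/
open Matrix

section Aux

variable {K : Type*} [Field K] {n : ℕ}

/-- The subgroup of invertible diagonal matrices. -/
def diagSubgroup (K : Type*) [Field K] (n : ℕ) : Subgroup (GL (Fin n) K) where
  carrier := {u | ∃ d : Fin n → K, (u : Matrix (Fin n) (Fin n) K) = Matrix.diagonal d}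
  one_mem' := ⟨fun _ => 1, by simp⟩
  mul_mem' := by
    rintro a b ⟨d, hd⟩ ⟨e, he⟩
    exact ⟨fun i => d i * e i, by rw [Units.val_mul, hd, he, Matrix.diagonal_mul_diagonal]⟩
  inv_mem' := by
    rintro a ⟨d, hd⟩
    have hdet : (Matrix.diagonal d).det ≠ 0 := by
      rw [← hd]
      exact IsUnit.ne_zero ((Matrix.isUnit_iff_isUnit_det _).mp a.isUnit)
    have hdi : ∀ i, d i ≠ 0 := by
      intro i hi
      apply hdet
      rw [Matrix.det_diagonal]
      exact Finset.prod_eq_zero (Finset.mem_univ i) hi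
    refine ⟨fun i => (d i)⁻¹, ?_⟩
    have h1 : Matrix.diagonal (fun i => (d i)⁻¹) * (a : Matrix (Fin n) (Fin n) K) = 1 := by
      rw [hd, Matrix.diagonal_mul_diagonal]
      rw [show (fun i => (d i)⁻¹ * d i) = fun _ => (1 : K) from funext fun i => inv_mul_cancel₀ (hdi i), Matrix.diagonal_one]
    calc ((a⁻¹ : GL (Fin n) K) : Matrix (Fin n) (Fin n) K)
        = 1 * ((a⁻¹ : GL (Fin n) K) : Matrix (Fin n) (Fin n) K) := (one_mul _).symm
      _ = Matrix.diagonal (fun i => (d i)⁻¹) *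
          ((a : Matrix (Fin n) (Fin n) K) * ((a⁻¹ : GL (Fin n) K) : Matrix (Fin n) (Fin n) K)) := by
          rw [← h1, Matrix.mul_assoc]
      _ = Matrix.diagonal (fun i => (d i)⁻¹) := by
          rw [← Units.val_mul, mul_inv_cancel, Units.val_one, Matrix.mul_one]

/-- The subgroup of transvections in a fixed position `(i, j)`. -/
def transvecSubgroup (K : Type*) [Field K] {n : ℕ} (i j : Fin n) (hij : i ≠ j) :
    Subgroup (GL (Fin n) K) where
  carrier := {u | ∃ t : K, (u : Matrix (Fin n) (Fin n) K) = Matrix.transvection i j t}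
  one_mem' := ⟨0, by simp [Matrix.transvection]⟩
  mul_mem' := by
    rintro a b ⟨s, hs⟩ ⟨t, ht⟩
    exact ⟨s + t, by rw [Units.val_mul, hs, ht, Matrix.transvection_mul_transvection_same _ _ hij]⟩
  inv_mem' := by
    rintro a ⟨t, ht⟩
    refine ⟨-t, ?_⟩
    have h1 : Matrix.transvection i j (-t) * (a : Matrix (Fin n) (Fin n) K) = 1 := by
      rw [ht, Matrix.transvection_mul_transvection_same _ _ hij, neg_add_cancel]
      simp [Matrix.transvection]
    calc ((a⁻¹ : GL (Fin n) K) : Matrix (Fin n) (Fin n) K)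
        = 1 * ((a⁻¹ : GL (Fin n) K) : Matrix (Fin n) (Fin n) K) := (one_mul _).symm
      _ = Matrix.transvection i j (-t) *
          ((a : Matrix (Fin n) (Fin n) K) * ((a⁻¹ : GL (Fin n) K) : Matrix (Fin n) (Fin n) K)) := by
          rw [← h1, Matrix.mul_assoc]
      _ = Matrix.transvection i j (-t) := by
          rw [← Units.val_mul, mul_inv_cancel, Units.val_one, Matrix.mul_one]

theorem transvection_pow {i j : Fin n} (hij : i ≠ j) (t : K) (k : ℕ) :
    (Matrix.transvection i j t) ^ k = Matrix.transvection i j ((k : K) * t) := by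
  induction k with
  | zero => simp [Matrix.transvection]
  | succ m ih =>
      rw [pow_succ, ih, Matrix.transvection_mul_transvection_same _ _ hij]
      push_cast
      ring_nf

end Aux

/-- Over an algebraically closed field of characteristic zero, the group of `K`-points of a
connected linear algebraic group — here the general linear group `GL_n(K)` — is generated by
its divisible subgroups (every element is a product of a semisimple element, lying in a torus
with divisible group of points, and unipotent elements, each lying in a subgroup isomorphic to
`𝔾_a(K) = (K,+)`). -/
theorem stmt_18 (K : Type*) [Field K] [IsAlgClosed K] [CharZero K] (n : ℕ) :
    Subgroup.closure
        (⋃ D ∈ {D : Subgroup (GL (Fin n) K) |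
            ∀ d ∈ D, ∀ k : ℕ, 0 < k → ∃ e ∈ D, e ^ k = d},
          (D : Set (GL (Fin n) K))) = ⊤ := by
  set S := Subgroup.closure
        (⋃ D ∈ {D : Subgroup (GL (Fin n) K) |
            ∀ d ∈ D, ∀ k : ℕ, 0 < k → ∃ e ∈ D, e ^ k = d},
          (D : Set (GL (Fin n) K))) with hS
  -- membership helper: any element of a divisible subgroup is in S
  have key : ∀ (D : Subgroup (GL (Fin n) K)),
      (∀ d ∈ D, ∀ k : ℕ, 0 < k → ∃ e ∈ D, e ^ k = d) → ∀ g ∈ D, g ∈ S := by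
    intro D hD g hg
    apply Subgroup.subset_closure
    exact Set.mem_iUnion₂.mpr ⟨D, hD, hg⟩
  -- the diagonal subgroup is divisible
  have hdiagdiv : ∀ d ∈ diagSubgroup K n, ∀ k : ℕ, 0 < k →
      ∃ e ∈ diagSubgroup K n, e ^ k = d := by
    rintro a ⟨d, hd⟩ k hk
    have hdet : (Matrix.diagonal d).det ≠ 0 := by
      rw [← hd]
      exact IsUnit.ne_zero ((Matrix.isUnit_iff_isUnit_det _).mp a.isUnit)
    have hdi : ∀ i, d i ≠ 0 := by
      intro i hi
      apply hdet
      rw [Matrix.det_diagonal]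
      exact Finset.prod_eq_zero (Finset.mem_univ i) hi
    choose z hz using fun i => IsAlgClosed.exists_pow_nat_eq (d i) hk
    have hzi : ∀ i, z i ≠ 0 := by
      intro i hzi0
      exact hdi i (by rw [← hz i, hzi0, zero_pow hk.ne'])
    have hinv : Matrix.diagonal z * Matrix.diagonal (fun i => (z i)⁻¹) = 1 := by
      rw [Matrix.diagonal_mul_diagonal]
      rw [show (fun i => z i * (z i)⁻¹) = fun _ => (1 : K) from funext fun i => mul_inv_cancel₀ (hzi i), Matrix.diagonal_one]
    have hinv' : Matrix.diagonal (fun i => (z i)⁻¹) * Matrix.diagonal z = 1 := by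
      rw [Matrix.diagonal_mul_diagonal]
      rw [show (fun i => (z i)⁻¹ * z i) = fun _ => (1 : K) from funext fun i => inv_mul_cancel₀ (hzi i), Matrix.diagonal_one]
    refine ⟨⟨Matrix.diagonal z, Matrix.diagonal (fun i => (z i)⁻¹), hinv, hinv'⟩, ⟨z, rfl⟩, ?_⟩
    apply Units.ext
    show (Matrix.diagonal z) ^ k = _
    rw [Matrix.diagonal_pow, hd, show z ^ k = d from funext fun i => hz i]
  -- each transvection subgroup is divisible
  have htransdiv : ∀ (i j : Fin n) (hij : i ≠ j),
      ∀ d ∈ transvecSubgroup K i j hij, ∀ k : ℕ, 0 < k →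
        ∃ e ∈ transvecSubgroup K i j hij, e ^ k = d := by
    rintro i j hij a ⟨t, ht⟩ k hk
    have hk0 : (k : K) ≠ 0 := Nat.cast_ne_zero.mpr hk.ne'
    have hinv : Matrix.transvection i j (t / k) * Matrix.transvection i j (-(t / k)) = 1 := by
      rw [Matrix.transvection_mul_transvection_same _ _ hij, add_neg_cancel]
      simp [Matrix.transvection]
    have hinv' : Matrix.transvection i j (-(t / k)) * Matrix.transvection i j (t / k) = 1 := by
      rw [Matrix.transvection_mul_transvection_same _ _ hij, neg_add_cancel]
      simp [Matrix.transvection]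
    refine ⟨⟨Matrix.transvection i j (t / k), Matrix.transvection i j (-(t / k)), hinv, hinv'⟩,
      ⟨t / k, rfl⟩, ?_⟩
    apply Units.ext
    show (Matrix.transvection i j (t / k)) ^ k = _
    rw [transvection_pow hij, ht]
    field_simp
  -- main argument
  rw [eq_top_iff]
  rintro g -
  have P : ∃ u : GL (Fin n) K, u ∈ S ∧
      (u : Matrix (Fin n) (Fin n) K) = (g : Matrix (Fin n) (Fin n) K) := by
    have hgdet : ((g : Matrix (Fin n) (Fin n) K)).det ≠ 0 :=
      IsUnit.ne_zero ((Matrix.isUnit_iff_isUnit_det _).mp g.isUnit)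
    refine Matrix.diagonal_transvection_induction_of_det_ne_zero
      (fun M => ∃ u : GL (Fin n) K, u ∈ S ∧ (u : Matrix (Fin n) (Fin n) K) = M)
      _ hgdet ?_ ?_ ?_
    · intro d hd
      have hdi : ∀ i, d i ≠ 0 := by
        intro i hi
        apply hd
        rw [Matrix.det_diagonal]
        exact Finset.prod_eq_zero (Finset.mem_univ i) hi
      have hinv : Matrix.diagonal d * Matrix.diagonal (fun i => (d i)⁻¹) = 1 := by
        rw [Matrix.diagonal_mul_diagonal]
        rw [show (fun i => d i * (d i)⁻¹) = fun _ => (1 : K) from funext fun i => mul_inv_cancel₀ (hdi i), Matrix.diagonal_one]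
      have hinv' : Matrix.diagonal (fun i => (d i)⁻¹) * Matrix.diagonal d = 1 := by
        rw [Matrix.diagonal_mul_diagonal]
        rw [show (fun i => (d i)⁻¹ * d i) = fun _ => (1 : K) from funext fun i => inv_mul_cancel₀ (hdi i), Matrix.diagonal_one]
      refine ⟨⟨Matrix.diagonal d, Matrix.diagonal (fun i => (d i)⁻¹), hinv, hinv'⟩, ?_, rfl⟩
      exact key _ hdiagdiv _ ⟨d, rfl⟩
    · intro t
      have hinv : Matrix.transvection t.i t.j t.c * Matrix.transvection t.i t.j (-t.c) = 1 := by
        rw [Matrix.transvection_mul_transvection_same _ _ t.hij, add_neg_cancel]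
        simp [Matrix.transvection]
      have hinv' : Matrix.transvection t.i t.j (-t.c) * Matrix.transvection t.i t.j t.c = 1 := by
        rw [Matrix.transvection_mul_transvection_same _ _ t.hij, neg_add_cancel]
        simp [Matrix.transvection]
      refine ⟨⟨Matrix.transvection t.i t.j t.c, Matrix.transvection t.i t.j (-t.c), hinv, hinv'⟩,
        ?_, ?_⟩
      · exact key _ (htransdiv t.i t.j t.hij) _ ⟨t.c, rfl⟩
      · simp [Matrix.TransvectionStruct.toMatrix]
    · rintro A B - - ⟨u, hu, hA⟩ ⟨v, hv, hB⟩
      exact ⟨u * v, S.mul_mem hu hv, by rw [Units.val_mul, hA, hB]⟩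
  obtain ⟨u, hu, huv⟩ := P
  have : u = g := Units.ext huv
  rwa [← this]
end
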